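/- arXiv:2107.04081 — 5 statements merged into one kernel-verified Lean document; each statement's English description precedes it below -/
import Mathlib

section
/- Let K be a non-empty set of colors, let W ⊆ K^ω be Borel with ∅ ⊊ W ⊊ K^ω, and let F = ⟨S_A, S_B, O, ρ⟩ be a game form that is not determined. Then there exist a deterministic concurrent arena C = ⟨S_A, S_B, Q, q0, δ, K, col⟩ and a function h : O → Q with δ(q0,a,b) = h(ρ(a,b)) for all a ∈ S_A, b ∈ S_B (i.e., the local interaction at q0 is F up to a renaming of the outcomes), such that for every state q ≠ q0 the value δ(q,a,b) does not depend on (a,b) (all other local interactions are trivial, hence determined), and neither player has a winning color strategy in ⟨C, W⟩; moreover neither player has a winning deterministic state strategy. -/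
open MeasureTheory
open scoped Classical

universe u

/-- The cylinder set generated by a finite word. -/
def Cyl {K : Type u} (w : List K) : Set (ℕ → K) :=
  {ρ | ∀ i : ℕ, ∀ h : i < w.length, ρ i = w.get ⟨i, h⟩}

/-- The σ-algebra on `ℕ → K` generated by cylinder sets. -/
def BorelSeq (K : Type u) : MeasurableSpace (ℕ → K) :=
  MeasurableSpace.generateFrom {s | ∃ w : List K, s = Cyl w}

/-- A game form (given by its outcome function `ρ : S_A → S_B → O`) is determined if
for every subset `V` of outcomes, either Player A can force the outcome into `V`,
or Player B can force it out of `V`. -/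
def GFDetermined {SA SB O : Type u} (ρ : SA → SB → O) : Prop :=
  ∀ V : Set O, (∃ a, ∀ b, ρ a b ∈ V) ∨ (∃ b, ∀ a, ρ a b ∉ V)

/-- The color history `col(π_0,π_1) ⋯ col(π_{n-1},π_n)` of a play prefix. -/
def colorHist {Q K : Type u} (col : Q → Q → K) (π : ℕ → Q) (n : ℕ) : List K :=
  List.ofFn (fun i : Fin n => col (π i) (π (i + 1)))

/-- The color sequence of an infinite play. -/
def colorSeq {Q K : Type u} (col : Q → Q → K) (π : ℕ → Q) : ℕ → K :=
  fun n => col (π n) (π (n + 1))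

/-- `π` is a play consistent with Player A's color strategy `sA`. -/
def PlayA {A B Q K : Type u} (q0 : Q) (δ : Q → A → B → Q) (col : Q → Q → K)
    (sA : List K → Q → A) (π : ℕ → Q) : Prop :=
  π 0 = q0 ∧ ∀ n, ∃ b, π (n + 1) = δ (π n) (sA (colorHist col π n) (π n)) b

/-- `π` is a play consistent with Player B's color strategy `sB`. -/
def PlayB {A B Q K : Type u} (q0 : Q) (δ : Q → A → B → Q) (col : Q → Q → K)
    (sB : List K → Q → B) (π : ℕ → Q) : Prop :=
  π 0 = q0 ∧ ∀ n, ∃ a, π (n + 1) = δ (π n) a (sB (colorHist col π n) (π n))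

/-- Player A's color strategy `sA` is winning for objective `W`. -/
def WinA {A B Q K : Type u} (q0 : Q) (δ : Q → A → B → Q) (col : Q → Q → K)
    (W : Set (ℕ → K)) (sA : List K → Q → A) : Prop :=
  ∀ π : ℕ → Q, PlayA q0 δ col sA π → colorSeq col π ∈ W

/-- Player B's color strategy `sB` is winning for the objective complementary to `W`. -/
def WinB {A B Q K : Type u} (q0 : Q) (δ : Q → A → B → Q) (col : Q → Q → K)
    (W : Set (ℕ → K)) (sB : List K → Q → B) : Prop :=
  ∀ π : ℕ → Q, PlayB q0 δ col sB π → colorSeq col π ∉ W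

/-- The state history `π_0 ⋯ π_n` of a play prefix. -/
def stateHist {Q : Type u} (π : ℕ → Q) (n : ℕ) : List Q :=
  List.ofFn (fun i : Fin (n + 1) => π i)

/-- `π` is a play consistent with Player A's deterministic state strategy `tA`. -/
def PlayStateA {A B Q : Type u} (q0 : Q) (δ : Q → A → B → Q)
    (tA : List Q → A) (π : ℕ → Q) : Prop :=
  π 0 = q0 ∧ ∀ n, ∃ b, π (n + 1) = δ (π n) (tA (stateHist π n)) b

/-- `π` is a play consistent with Player B's deterministic state strategy `tB`. -/
def PlayStateB {A B Q : Type u} (q0 : Q) (δ : Q → A → B → Q)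
    (tB : List Q → B) (π : ℕ → Q) : Prop :=
  π 0 = q0 ∧ ∀ n, ∃ a, π (n + 1) = δ (π n) a (tB (stateHist π n))

/-- Player A's deterministic state strategy `tA` is winning for objective `W`. -/
def WinStateA {A B Q K : Type u} (q0 : Q) (δ : Q → A → B → Q) (col : Q → Q → K)
    (W : Set (ℕ → K)) (tA : List Q → A) : Prop :=
  ∀ π : ℕ → Q, PlayStateA q0 δ tA π → colorSeq col π ∈ W

/-- Player B's deterministic state strategy `tB` is winning for the complement of `W`. -/
def WinStateB {A B Q K : Type u} (q0 : Q) (δ : Q → A → B → Q) (col : Q → Q → K)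
    (W : Set (ℕ → K)) (tB : List Q → B) : Prop :=
  ∀ π : ℕ → Q, PlayStateB q0 δ tB π → colorSeq col π ∉ W


/-- Auxiliary state space for the arena construction. -/
abbrev ArQ : Type u := Option (Bool × ULift.{u} ℕ)

/-- Auxiliary transition function. -/
noncomputable def arδ {SA SB O : Type u} (V : Set O) (ρ : SA → SB → O) :
    ArQ.{u} → SA → SB → ArQ.{u}
  | none, a, b => some (if ρ a b ∈ V then true else false, ⟨0⟩)
  | some (x, n), _, _ => some (x, ⟨n.down + 1⟩)

/-- Auxiliary coloring. -/
def arcol {K : Type u} (α β : ℕ → K) : ArQ.{u} → ArQ.{u} → K :=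
  fun _ q' => match q' with
  | some (x, n) => if x then α n.down else β n.down
  | none => α 0

/-- Auxiliary fixed play. -/
def arplay (x : Bool) : ℕ → ArQ.{u}
  | 0 => none
  | n + 1 => some (x, ⟨n⟩)

lemma arplay_colorSeq {K : Type u} (α β : ℕ → K) (x : Bool) :
    colorSeq (arcol α β) (arplay x) = if x then α else β := by
  funext n
  simp only [colorSeq, arplay, arcol]
  cases x <;> simp

lemma arplay_succ {SA SB O : Type u} (V : Set O) (ρ : SA → SB → O) (x : Bool)
    (m : ℕ) (a : SA) (b : SB) :
    arplay x (m + 2) = arδ V ρ (arplay x (m + 1)) a b := rfl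

/-- For every non-trivial Borel objective `W` and every non-determined game form
`F = ⟨S_A, S_B, O, ρ⟩`, there is a deterministic concurrent arena whose local
interaction at the initial state is `F` (up to a renaming `h` of the outcomes) and
whose other local interactions are trivial, such that neither player has a winning
color strategy, nor even a winning deterministic state strategy. -/
theorem stmt2 {SA SB O K : Type u} [Nonempty SA] [Nonempty SB] [Nonempty O]
    [Nonempty K]
    (W : Set (ℕ → K)) (hW : MeasurableSet[BorelSeq K] W)
    (hWne : W.Nonempty) (hWne' : Wᶜ.Nonempty)
    (ρ : SA → SB → O) (hnd : ¬ GFDetermined ρ) :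
    ∃ (Q : Type u) (_ : Nonempty Q) (q0 : Q) (δ : Q → SA → SB → Q)
      (col : Q → Q → K) (h : O → Q),
      (∀ a b, δ q0 a b = h (ρ a b)) ∧
      (∀ q : Q, q ≠ q0 → ∀ a a' b b', δ q a b = δ q a' b') ∧
      (¬ ∃ sA : List K → Q → SA, WinA q0 δ col W sA) ∧
      (¬ ∃ sB : List K → Q → SB, WinB q0 δ col W sB) ∧
      (¬ ∃ tA : List Q → SA, WinStateA q0 δ col W tA) ∧
      (¬ ∃ tB : List Q → SB, WinStateB q0 δ col W tB) := by
  obtain ⟨V, hA, hB⟩ : ∃ V : Set O, (∀ a, ∃ b, ρ a b ∉ V) ∧ (∀ b, ∃ a, ρ a b ∈ V) := by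
    unfold GFDetermined at hnd
    push_neg at hnd
    obtain ⟨V, h1, h2⟩ := hnd
    exact ⟨V, h1, h2⟩
  obtain ⟨α, hα⟩ := hWne
  obtain ⟨β, hβ⟩ := hWne'
  refine ⟨ArQ.{u}, ⟨none⟩, none, arδ V ρ, arcol α β,
    fun o => some (if o ∈ V then true else false, ⟨0⟩), fun a b => rfl, ?_, ?_, ?_, ?_, ?_⟩
  · rintro (_ | ⟨x, n⟩) hq a a' b b'
    · exact absurd rfl hq
    · rfl
  · rintro ⟨sA, hsA⟩
    obtain ⟨b0, hb0⟩ := hA (sA [] none)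
    have hplay : PlayA none (arδ V ρ) (arcol α β) sA (arplay false) := by
      refine ⟨rfl, fun n => ?_⟩
      cases n with
      | zero =>
        refine ⟨b0, ?_⟩
        have hch : colorHist (arcol α β) (arplay false) 0 = [] := rfl
        rw [hch]
        show some (false, ⟨0⟩) = arδ V ρ none (sA [] none) b0
        simp [arδ, hb0]
      | succ m => exact ⟨b0, arplay_succ V ρ false m _ _⟩
    have := hsA (arplay false) hplay
    rw [arplay_colorSeq] at this
    simp at this
    exact hβ this
  · rintro ⟨sB, hsB⟩
    obtain ⟨a0, ha0⟩ := hB (sB [] none)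
    have hplay : PlayB none (arδ V ρ) (arcol α β) sB (arplay true) := by
      refine ⟨rfl, fun n => ?_⟩
      cases n with
      | zero =>
        refine ⟨a0, ?_⟩
        have hch : colorHist (arcol α β) (arplay true) 0 = [] := rfl
        rw [hch]
        show some (true, ⟨0⟩) = arδ V ρ none a0 (sB [] none)
        simp [arδ, ha0]
      | succ m => exact ⟨a0, arplay_succ V ρ true m _ _⟩
    have := hsB (arplay true) hplay
    rw [arplay_colorSeq] at this
    simp at this
    exact this hα
  · rintro ⟨tA, htA⟩
    obtain ⟨b0, hb0⟩ := hA (tA [none])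
    have hplay : PlayStateA none (arδ V ρ) tA (arplay false) := by
      refine ⟨rfl, fun n => ?_⟩
      cases n with
      | zero =>
        refine ⟨b0, ?_⟩
        have hch : stateHist (arplay false) 0 = [none] := rfl
        rw [hch]
        show some (false, ⟨0⟩) = arδ V ρ none (tA [none]) b0
        simp [arδ, hb0]
      | succ m => exact ⟨b0, arplay_succ V ρ false m _ _⟩
    have := htA (arplay false) hplay
    rw [arplay_colorSeq] at this
    simp at this
    exact hβ this
  · rintro ⟨tB, htB⟩
    obtain ⟨a0, ha0⟩ := hB (tB [none])
    have hplay : PlayStateB none (arδ V ρ) tB (arplay true) := by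
      refine ⟨rfl, fun n => ?_⟩
      cases n with
      | zero =>
        refine ⟨a0, ?_⟩
        have hch : stateHist (arplay true) 0 = [none] := rfl
        rw [hch]
        show some (true, ⟨0⟩) = arδ V ρ none a0 (tB [none])
        simp [arδ, ha0]
      | succ m => exact ⟨a0, arplay_succ V ρ true m _ _⟩
    have := htB (arplay true) hplay
    rw [arplay_colorSeq] at this
    simp at this
    exact this hα
end

section
/- Let C = ⟨A, B, Q, q0, δ, K, col⟩ be a locally determined deterministic concurrent arena and W ⊆ K^ω. Then Player A has a winning color strategy in ⟨C, W⟩ if and only if Player A has a winning color strategy in the sequential game ⟨Seq(C), Seq(W)⟩, and likewise Player B has a winning color strategy in ⟨C, W⟩ if and only if Player B has one in ⟨Seq(C), Seq(W)⟩. In particular, ⟨C, W⟩ is determined if and only if ⟨Seq(C), Seq(W)⟩ is determined. -/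
open MeasureTheory
open scoped Classical

universe u

/-- Transition function of the sequential version: from a Player A vertex `q`,
action `a` moves to `(q, a)`; from a Player B vertex `(q, a)`, Player B's action `b`
moves to `δ q a b`. -/
def seqDelta {A B Q : Type u} (δ : Q → A → B → Q) :
    Q ⊕ Q × A → A → B → Q ⊕ Q × A
  | Sum.inl q, a, _ => Sum.inr (q, a)
  | Sum.inr qa, _, b => Sum.inl (δ qa.1 qa.2 b)

/-- Coloring of the sequential version: edges `(q, a) → q'` carry `some (col q q')`,
all other edges carry the fresh color `none`. -/
def seqCol {A Q K : Type u} (col : Q → Q → K) :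
    Q ⊕ Q × A → Q ⊕ Q × A → Option K
  | Sum.inr qa, Sum.inl q' => some (col qa.1 q')
  | _, _ => none

/-- The length-`n` prefix of an infinite sequence, as a finite word. -/
def prefixWord {D : Type u} (ρ : ℕ → D) (n : ℕ) : List D :=
  List.ofFn (fun i : Fin n => ρ i)

/-- A finite word is a prefix of an infinite sequence. -/
def IsPrefixOfSeq {K : Type u} (w : List K) (ρ : ℕ → K) : Prop :=
  ∀ i : ℕ, ∀ h : i < w.length, w.get ⟨i, h⟩ = ρ i

/-- `ρ ∈ K^ω` is the projection of `ρ' ∈ (Option K)^ω`: every erased prefix of `ρ'`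
is a prefix of `ρ` and the lengths of the erased prefixes tend to infinity
(equivalently, `ρ'` has infinitely many `some` entries whose values, in order,
form `ρ`). -/
def IsProjOf {K : Type u} (ρ : ℕ → K) (ρ' : ℕ → Option K) : Prop :=
  (∀ n : ℕ, IsPrefixOfSeq ((prefixWord ρ' n).reduceOption) ρ) ∧
  Filter.Tendsto (fun n => ((prefixWord ρ' n).reduceOption).length)
    Filter.atTop Filter.atTop

/-- The sequential version `Seq(W)` of an objective `W ⊆ K^ω`: the sequences in
`(Option K)^ω` with infinitely many `some` entries whose subsequence of values
lies in `W`. -/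
def SeqObj {K : Type u} (W : Set (ℕ → K)) : Set (ℕ → Option K) :=
  {ρ' | ∃ ρ ∈ W, IsProjOf ρ ρ'}


namespace Stmt5Aux

variable {A B Q K : Type u}

def interleave (h : List K) : List (Option K) := h.flatMap fun c => [none, some c]

@[simp] lemma interleave_nil : interleave ([] : List K) = [] := rfl

lemma interleave_append (h : List K) (c : K) :
    interleave (h ++ [c]) = interleave h ++ [none, some c] := by
  simp [interleave]

lemma reduceOption_interleave (h : List K) : (interleave h).reduceOption = h := by
  induction h with
  | nil => rfl
  | cons c t ih => simp [interleave] at ih ⊢; simp [ih]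

lemma colorHist_succ (col : Q → Q → K) (π : ℕ → Q) (n : ℕ) :
    colorHist col π (n+1) = colorHist col π n ++ [col (π n) (π (n+1))] := by
  unfold colorHist
  rw [List.ofFn_succ']
  simp only [Fin.coe_castSucc, Fin.val_last, List.concat_eq_append]

def liftPlay (π : ℕ → Q) (act : ℕ → A) (m : ℕ) : Q ⊕ Q × A :=
  if h : m % 2 = 0 then Sum.inl (π (m/2)) else Sum.inr (π (m/2), act (m/2))

lemma liftPlay_even (π : ℕ → Q) (act : ℕ → A) (n : ℕ) :
    liftPlay π act (2*n) = Sum.inl (π n) := by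
  unfold liftPlay
  rw [dif_pos (by omega)]
  have h : 2*n/2 = n := by omega
  rw [h]

lemma liftPlay_odd (π : ℕ → Q) (act : ℕ → A) (n : ℕ) :
    liftPlay π act (2*n+1) = Sum.inr (π n, act n) := by
  unfold liftPlay
  rw [dif_neg (by omega)]
  have h : (2*n+1)/2 = n := by omega
  rw [h]

lemma liftPlay_zero (π : ℕ → Q) (act : ℕ → A) : liftPlay π act 0 = Sum.inl (π 0) := by
  simpa using liftPlay_even π act 0

lemma liftPlay_even' (π : ℕ → Q) (act : ℕ → A) (n : ℕ) :
    liftPlay π act (2*n+1+1) = Sum.inl (π (n+1)) := by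
  have h : 2*n+1+1 = 2*(n+1) := by ring
  rw [h, liftPlay_even]




@[simp] lemma seqDelta_inl (dlt : Q → A → B → Q) (q : Q) (a : A) (b : B) :
    seqDelta dlt (Sum.inl q) a b = Sum.inr (q, a) := rfl

@[simp] lemma seqDelta_inr (dlt : Q → A → B → Q) (q : Q) (a a' : A) (b : B) :
    seqDelta dlt (Sum.inr (q, a)) a' b = Sum.inl (dlt q a b) := rfl

@[simp] lemma seqCol_inl_inr (col : Q → Q → K) (q : Q) (qa : Q × A) :
    seqCol col (Sum.inl q) (Sum.inr qa) = none := rfl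

@[simp] lemma seqCol_inr_inl (col : Q → Q → K) (q : Q) (a : A) (q' : Q) :
    seqCol col (Sum.inr (q, a)) (Sum.inl q') = some (col q q') := rfl

lemma hist_interleave (col : Q → Q → K) (π : ℕ → Q) (act : ℕ → A) :
    ∀ n, colorHist (seqCol col) (liftPlay π act) (2*n) = interleave (colorHist col π n)
  | 0 => rfl
  | (n+1) => by
    have e : 2*(n+1) = 2*n+1+1 := by ring
    rw [e, colorHist_succ, colorHist_succ, hist_interleave col π act n,
      colorHist_succ, interleave_append, liftPlay_even, liftPlay_odd, liftPlay_even']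
    simp

lemma hist_odd (col : Q → Q → K) (π : ℕ → Q) (act : ℕ → A) (n : ℕ) :
    colorHist (seqCol col) (liftPlay π act) (2*n+1)
      = interleave (colorHist col π n) ++ [none] := by
  rw [colorHist_succ, hist_interleave, liftPlay_even, liftPlay_odd, seqCol_inl_inr]

lemma hist_reduce_even (col : Q → Q → K) (π : ℕ → Q) (act : ℕ → A) (n : ℕ) :
    (colorHist (seqCol col) (liftPlay π act) (2*n)).reduceOption = colorHist col π n := by
  rw [hist_interleave, reduceOption_interleave]

lemma hist_reduce_odd (col : Q → Q → K) (π : ℕ → Q) (act : ℕ → A) (n : ℕ) :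
    (colorHist (seqCol col) (liftPlay π act) (2*n+1)).reduceOption = colorHist col π n := by
  rw [hist_odd, List.reduceOption_append, reduceOption_interleave]
  simp

lemma prefixWord_eq_colorHist (col : Q → Q → K) (π : ℕ → Q) (m : ℕ) :
    prefixWord (colorSeq col π) m = colorHist col π m := rfl

lemma hist_reduce (col : Q → Q → K) (π : ℕ → Q) (act : ℕ → A) (m : ℕ) :
    (colorHist (seqCol col) (liftPlay π act) m).reduceOption = colorHist col π (m/2) := by
  obtain ⟨n, rfl | rfl⟩ : ∃ n, m = 2*n ∨ m = 2*n+1 := ⟨m/2, by omega⟩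
  · rw [hist_reduce_even]
    congr 1
    omega
  · rw [hist_reduce_odd]
    congr 1
    omega

lemma hist_prefix (col : Q → Q → K) (π : ℕ → Q) (k : ℕ) :
    IsPrefixOfSeq (colorHist col π k) (colorSeq col π) := by
  intro i h
  simp [colorHist, colorSeq, List.get_eq_getElem, List.getElem_ofFn]

lemma length_colorHist (col : Q → Q → K) (π : ℕ → Q) (k : ℕ) :
    (colorHist col π k).length = k := by simp [colorHist]

lemma proj_lift (col : Q → Q → K) (π : ℕ → Q) (act : ℕ → A) :
    IsProjOf (colorSeq col π) (colorSeq (seqCol col) (liftPlay π act)) := by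
  constructor
  · intro m
    rw [prefixWord_eq_colorHist, hist_reduce]
    exact hist_prefix col π (m/2)
  · have he : ∀ m : ℕ, ((prefixWord (colorSeq (seqCol col) (liftPlay π act)) m).reduceOption).length = m/2 := by
      intro m
      rw [prefixWord_eq_colorHist, hist_reduce, length_colorHist]
    refine Filter.tendsto_atTop_atTop.mpr (fun N => ⟨2*N, fun m hm => ?_⟩)
    rw [he]
    omega

lemma proj_unique {ρ σ : ℕ → K} {ρ' : ℕ → Option K}
    (h1 : IsProjOf ρ ρ') (h2 : IsProjOf σ ρ') : ρ = σ := by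
  funext i
  obtain ⟨m, hm⟩ := (h1.2.eventually_ge_atTop (i+1)).exists
  have e1 := h1.1 m i (by omega)
  have e2 := h2.1 m i (by omega)
  rw [← e1, ← e2]

lemma seq_alt [Nonempty A] (dlt : Q → A → B → Q) (q0 : Q)
    (π' : ℕ → Q ⊕ Q × A) (h0 : π' 0 = Sum.inl q0)
    (hs : ∀ m, ∃ a b, π' (m+1) = seqDelta dlt (π' m) a b) :
    ∃ (π : ℕ → Q) (act : ℕ → A), π 0 = q0 ∧ π' = liftPlay π act := by
  have key : ∀ n, ∃ q a, π' (2*n) = Sum.inl q ∧ π' (2*n+1) = Sum.inr (q, a) := by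
    intro n
    induction n with
    | zero =>
      obtain ⟨a, b, h1⟩ := hs 0
      rw [h0] at h1
      exact ⟨q0, a, h0, h1⟩
    | succ n ih =>
      obtain ⟨q, a, h2n, h2n1⟩ := ih
      obtain ⟨a', b', h2⟩ := hs (2*n+1)
      rw [h2n1] at h2
      obtain ⟨a'', b'', h3⟩ := hs (2*n+1+1)
      rw [h2] at h3
      have e1 : 2*(n+1) = 2*n+1+1 := by ring
      have e2 : 2*(n+1)+1 = 2*n+1+1+1 := by ring
      rw [e1]
      exact ⟨dlt q a b', a'', h2, h3⟩
  choose qf af h1 h2 using key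
  refine ⟨qf, af, ?_, ?_⟩
  · have := h1 0
    rw [show 2*0 = 0 from rfl, h0] at this
    exact (Sum.inl.injEq _ _).mp this.symm
  · funext m
    obtain ⟨n, rfl | rfl⟩ : ∃ n, m = 2*n ∨ m = 2*n+1 := ⟨m/2, by omega⟩
    · rw [h1 n, liftPlay_even]
    · rw [h2 n, liftPlay_odd]

variable [Nonempty A] [Nonempty B]

lemma dirA_fwd (q0 : Q) (dlt : Q → A → B → Q) (col : Q → Q → K) (W : Set (ℕ → K))
    (h : ∃ sA : List K → Q → A, WinA q0 dlt col W sA) :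
    ∃ σA : List (Option K) → Q ⊕ Q × A → A,
      WinA (Sum.inl q0) (seqDelta dlt) (seqCol col) (SeqObj W) σA := by
  obtain ⟨sA, hsA⟩ := h
  refine ⟨fun h' v => Sum.elim (fun q => sA h'.reduceOption q)
    (fun _ => Classical.arbitrary A) v, ?_⟩
  intro π' hπ'
  obtain ⟨h0, hstep⟩ := hπ'
  obtain ⟨π, act, hπ0, rfl⟩ := seq_alt dlt q0 π' h0
    (fun m => ⟨_, (hstep m).choose, (hstep m).choose_spec⟩)
  have hact : ∀ n, act n = sA (colorHist col π n) (π n) := by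
    intro n
    obtain ⟨b, hb⟩ := hstep (2*n)
    rw [liftPlay_even, liftPlay_odd, seqDelta_inl] at hb
    simpa [hist_reduce_even] using congrArg Prod.snd (Sum.inr.inj hb)
  have hC : PlayA q0 dlt col sA π := by
    refine ⟨hπ0, fun n => ?_⟩
    obtain ⟨b, hb⟩ := hstep (2*n+1)
    rw [liftPlay_odd, liftPlay_even', seqDelta_inr] at hb
    exact ⟨b, by rw [← hact n]; exact Sum.inl.inj hb⟩
  exact ⟨colorSeq col π, hsA π hC, proj_lift col π act⟩

lemma dirA_bwd (q0 : Q) (dlt : Q → A → B → Q) (col : Q → Q → K) (W : Set (ℕ → K))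
    (h : ∃ σA : List (Option K) → Q ⊕ Q × A → A,
      WinA (Sum.inl q0) (seqDelta dlt) (seqCol col) (SeqObj W) σA) :
    ∃ sA : List K → Q → A, WinA q0 dlt col W sA := by
  obtain ⟨σA, hσA⟩ := h
  refine ⟨fun h q => σA (interleave h) (Sum.inl q), ?_⟩
  intro π hπ
  obtain ⟨h0, hstep⟩ := hπ
  have hplay : PlayA (Sum.inl q0) (seqDelta dlt) (seqCol col) σA
      (liftPlay π (fun n => σA (interleave (colorHist col π n)) (Sum.inl (π n)))) := by
    refine ⟨by rw [liftPlay_zero, h0], fun m => ?_⟩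
    obtain ⟨n, rfl | rfl⟩ : ∃ n, m = 2*n ∨ m = 2*n+1 := ⟨m/2, by omega⟩
    · refine ⟨Classical.arbitrary B, ?_⟩
      rw [liftPlay_odd, liftPlay_even, seqDelta_inl, hist_interleave]
    · obtain ⟨b, hb⟩ := hstep n
      refine ⟨b, ?_⟩
      rw [liftPlay_even', liftPlay_odd, seqDelta_inr, hb]
  obtain ⟨ρ, hρ, hproj⟩ := hσA _ hplay
  rw [proj_unique (proj_lift col π _) hproj]
  exact hρ

lemma dirB_fwd (q0 : Q) (dlt : Q → A → B → Q) (col : Q → Q → K) (W : Set (ℕ → K))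
    (h : ∃ sB : List K → Q → B, WinB q0 dlt col W sB) :
    ∃ σB : List (Option K) → Q ⊕ Q × A → B,
      WinB (Sum.inl q0) (seqDelta dlt) (seqCol col) (SeqObj W) σB := by
  obtain ⟨sB, hsB⟩ := h
  refine ⟨fun h' v => Sum.elim (fun _ => Classical.arbitrary B)
    (fun qa => sB h'.reduceOption qa.1) v, ?_⟩
  intro π' hπ'
  obtain ⟨h0, hstep⟩ := hπ'
  obtain ⟨π, act, hπ0, rfl⟩ := seq_alt dlt q0 π' h0
    (fun m => ⟨(hstep m).choose, _, (hstep m).choose_spec⟩)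
  have hC : PlayB q0 dlt col sB π := by
    refine ⟨hπ0, fun n => ?_⟩
    obtain ⟨a, hb⟩ := hstep (2*n+1)
    rw [liftPlay_odd, liftPlay_even', seqDelta_inr] at hb
    refine ⟨act n, ?_⟩
    have := Sum.inl.inj hb
    simpa [hist_reduce_odd] using this
  rintro ⟨ρ, hρ, hproj⟩
  rw [← proj_unique (proj_lift col π act) hproj] at hρ
  exact hsB π hC hρ

lemma dirB_bwd (q0 : Q) (dlt : Q → A → B → Q) (col : Q → Q → K)
    (hloc : ∀ q : Q, GFDetermined (dlt q)) (W : Set (ℕ → K))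
    (hex : ∃ σB : List (Option K) → Q ⊕ Q × A → B,
      WinB (Sum.inl q0) (seqDelta dlt) (seqCol col) (SeqObj W) σB) :
    ∃ sB : List K → Q → B, WinB q0 dlt col W sB := by
  obtain ⟨σB, hσB⟩ := hex
  have hchoice : ∀ (h : List K) (q : Q), ∃ b : B, ∀ a : A, ∃ a' : A,
      dlt q a b = dlt q a' (σB (interleave h ++ [none]) (Sum.inr (q, a'))) := by
    intro h q
    rcases hloc q {q' | ¬ ∃ a' : A,
        q' = dlt q a' (σB (interleave h ++ [none]) (Sum.inr (q, a')))} with ⟨a, ha⟩ | ⟨b, hb⟩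
    · exact absurd ⟨a, rfl⟩ (ha (σB (interleave h ++ [none]) (Sum.inr (q, a))))
    · refine ⟨b, fun a => ?_⟩
      have := hb a
      rw [Set.mem_setOf_eq] at this
      exact not_not.mp this
  choose sB hsBspec using hchoice
  refine ⟨sB, ?_⟩
  intro π hπ hW
  obtain ⟨h0, hstep⟩ := hπ
  have hact : ∀ n, ∃ a' : A, π (n+1) = dlt (π n) a'
      (σB (interleave (colorHist col π n) ++ [none]) (Sum.inr (π n, a'))) := by
    intro n
    obtain ⟨a, ha⟩ := hstep n
    rw [ha]
    exact hsBspec (colorHist col π n) (π n) a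
  choose act hactspec using hact
  have hplay : PlayB (Sum.inl q0) (seqDelta dlt) (seqCol col) σB (liftPlay π act) := by
    refine ⟨by rw [liftPlay_zero, h0], fun m => ?_⟩
    obtain ⟨n, rfl | rfl⟩ : ∃ n, m = 2*n ∨ m = 2*n+1 := ⟨m/2, by omega⟩
    · exact ⟨act n, by rw [liftPlay_odd, liftPlay_even, seqDelta_inl]⟩
    · refine ⟨Classical.arbitrary A, ?_⟩
      rw [liftPlay_even', liftPlay_odd, seqDelta_inr, hactspec n, hist_odd]
  exact hσB _ hplay ⟨colorSeq col π, hW, proj_lift col π act⟩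


end Stmt5Aux

open Stmt5Aux

/-- For a locally determined deterministic concurrent game `⟨C, W⟩`: each player has
a winning color strategy in `⟨C, W⟩` iff she has one in the sequential version
`⟨Seq(C), Seq(W)⟩`; in particular `⟨C, W⟩` is determined iff `⟨Seq(C), Seq(W)⟩` is. -/
theorem stmt5 {A B Q K : Type u} [Nonempty A] [Nonempty B] [Nonempty Q] [Nonempty K]
    (q0 : Q) (δ : Q → A → B → Q) (col : Q → Q → K)
    (hloc : ∀ q : Q, GFDetermined (δ q)) (W : Set (ℕ → K)) :
    ((∃ sA : List K → Q → A, WinA q0 δ col W sA) ↔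
      (∃ σA : List (Option K) → Q ⊕ Q × A → A,
        WinA (Sum.inl q0) (seqDelta δ) (seqCol col) (SeqObj W) σA)) ∧
    ((∃ sB : List K → Q → B, WinB q0 δ col W sB) ↔
      (∃ σB : List (Option K) → Q ⊕ Q × A → B,
        WinB (Sum.inl q0) (seqDelta δ) (seqCol col) (SeqObj W) σB)) ∧
    (((∃ sA : List K → Q → A, WinA q0 δ col W sA) ∨
      (∃ sB : List K → Q → B, WinB q0 δ col W sB)) ↔
     ((∃ σA : List (Option K) → Q ⊕ Q × A → A,
        WinA (Sum.inl q0) (seqDelta δ) (seqCol col) (SeqObj W) σA) ∨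
      (∃ σB : List (Option K) → Q ⊕ Q × A → B,
        WinB (Sum.inl q0) (seqDelta δ) (seqCol col) (SeqObj W) σB))) := by
  have iffA : (∃ sA : List K → Q → A, WinA q0 δ col W sA) ↔
      (∃ σA : List (Option K) → Q ⊕ Q × A → A,
        WinA (Sum.inl q0) (seqDelta δ) (seqCol col) (SeqObj W) σA) :=
    ⟨dirA_fwd q0 δ col W, dirA_bwd q0 δ col W⟩
  have iffB : (∃ sB : List K → Q → B, WinB q0 δ col W sB) ↔
      (∃ σB : List (Option K) → Q ⊕ Q × A → B,
        WinB (Sum.inl q0) (seqDelta δ) (seqCol col) (SeqObj W) σB) :=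
    ⟨dirB_fwd q0 δ col W, dirB_bwd q0 δ col hloc W⟩
  exact ⟨iffA, iffB, or_congr iffA iffB⟩
end

section
/- Let C = ⟨A, B, Q, q0, δ, K, col⟩ be a locally determined deterministic concurrent arena and W ⊆ K^ω. If Player B has a winning color strategy in the sequential game ⟨Seq(C), Seq(W)⟩, then Player B has a winning color strategy in ⟨C, W⟩. -/
open MeasureTheory
open scoped Classical

universe u

/-- Embed a color history into the sequential arena's color alphabet. -/
def seqHist {K : Type u} (c : List K) : List (Option K) :=
  c.flatMap (fun k => [none, some k])

lemma reduceOption_seqHist {K : Type u} (c : List K) :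
    (seqHist c).reduceOption = c := by
  induction c with
  | nil => rfl
  | cons k c ih =>
    simp [seqHist, List.flatMap_cons] at *
    simpa [List.reduceOption_append] using ih

lemma seqHist_append {K : Type u} (c : List K) (k : K) :
    seqHist (c ++ [k]) = seqHist c ++ [none, some k] := by
  simp [seqHist]

lemma colorHist_succ {Q K : Type u} (col : Q → Q → K) (π : ℕ → Q) (n : ℕ) :
    colorHist col π (n + 1) = colorHist col π n ++ [col (π n) (π (n + 1))] := by
  rw [colorHist, List.ofFn_succ', List.concat_eq_append]
  rfl

lemma isPrefixOfSeq_prefixWord {K : Type u} (ρ : ℕ → K) (n : ℕ) :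
    IsPrefixOfSeq (prefixWord ρ n) ρ := by
  intro i h
  simp [prefixWord, List.get_ofFn]



/-- If the deterministic concurrent arena is locally determined and Player B has a
winning color strategy in the sequential game `⟨Seq(C), Seq(W)⟩`, then Player B has
a winning color strategy in `⟨C, W⟩`. -/
theorem stmt6 {A B Q K : Type u} [Nonempty A] [Nonempty B] [Nonempty Q] [Nonempty K]
    (q0 : Q) (δ : Q → A → B → Q) (col : Q → Q → K)
    (hloc : ∀ q : Q, GFDetermined (δ q)) (W : Set (ℕ → K))
    (hseq : ∃ σB : List (Option K) → Q ⊕ Q × A → B,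
      WinB (Sum.inl q0) (seqDelta δ) (seqCol col) (SeqObj W) σB) :
    ∃ sB : List K → Q → B, WinB q0 δ col W sB := by
  classical
  obtain ⟨σB, hσ⟩ := hseq
  -- the key local-determinacy step
  have key : ∀ (c : List K) (q : Q), ∃ b : B, ∀ a : A,
      ∃ a' : A, δ q a b = δ q a' (σB (seqHist c ++ [none]) (Sum.inr (q, a'))) := by
    intro c q
    rcases hloc q {q' | ¬ ∃ a' : A,
        q' = δ q a' (σB (seqHist c ++ [none]) (Sum.inr (q, a')))} with ⟨a, ha⟩ | ⟨b, hb⟩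
    · exact absurd (ha (σB (seqHist c ++ [none]) (Sum.inr (q, a)))) (by
        simp only [Set.mem_setOf_eq, not_not]
        exact ⟨a, rfl⟩)
    · refine ⟨b, fun a => ?_⟩
      have := hb a
      simp only [Set.mem_setOf_eq, not_not] at this
      exact this
  choose sB hsB using key
  refine ⟨sB, ?_⟩
  intro π hπ hW
  obtain ⟨h0, hstep⟩ := hπ
  have exa : ∀ n, ∃ a' : A, π (n + 1) =
      δ (π n) a' (σB (seqHist (colorHist col π n) ++ [none]) (Sum.inr (π n, a'))) := by
    intro n
    obtain ⟨a, ha⟩ := hstep n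
    obtain ⟨a', ha'⟩ := hsB (colorHist col π n) (π n) a
    exact ⟨a', by rw [ha, ha']⟩
  choose a' ha' using exa
  set π' : ℕ → Q ⊕ Q × A := fun m =>
    if m % 2 = 0 then Sum.inl (π (m / 2)) else Sum.inr (π (m / 2), a' (m / 2)) with hπ'def
  have he : ∀ n, π' (2 * n) = Sum.inl (π n) := by
    intro n
    have h1 : (2 * n) % 2 = 0 := by omega
    have h2 : (2 * n) / 2 = n := by omega
    simp [hπ'def, h1, h2]
  have ho : ∀ n, π' (2 * n + 1) = Sum.inr (π n, a' n) := by
    intro n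
    have h1 : (2 * n + 1) % 2 = 1 := by omega
    have h2 : (2 * n + 1) / 2 = n := by omega
    simp [hπ'def, h1, h2]
  -- color histories of the simulated play
  have hhist : ∀ n, colorHist (seqCol col) π' (2 * n) = seqHist (colorHist col π n) ∧
      colorHist (seqCol col) π' (2 * n + 1) = seqHist (colorHist col π n) ++ [none] := by
    intro n
    induction n with
    | zero =>
      constructor
      · rfl
      · have : (2 * 0 + 1) = 0 + 1 := by omega
        rw [this, colorHist_succ]
        have e0 : π' 0 = Sum.inl (π 0) := he 0
        have e1 : π' 1 = Sum.inr (π 0, a' 0) := ho 0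
        simp [colorHist, e0, e1, seqCol, seqHist]
    | succ n ih =>
      have e1 : 2 * (n + 1) = (2 * n + 1) + 1 := by omega
      have heven : colorHist (seqCol col) π' (2 * (n + 1)) =
          seqHist (colorHist col π (n + 1)) := by
        rw [e1, colorHist_succ, ih.2]
        have ea : π' (2 * n + 1) = Sum.inr (π n, a' n) := ho n
        have eb : π' (2 * n + 1 + 1) = Sum.inl (π (n + 1)) := by
          have : 2 * n + 1 + 1 = 2 * (n + 1) := by omega
          rw [this]; exact he (n + 1)
        rw [ea, eb, colorHist_succ, seqHist_append]
        simp [seqCol]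
      refine ⟨heven, ?_⟩
      rw [colorHist_succ, heven]
      have ea : π' (2 * (n + 1)) = Sum.inl (π (n + 1)) := he (n + 1)
      have eb : π' (2 * (n + 1) + 1) = Sum.inr (π (n + 1), a' (n + 1)) := ho (n + 1)
      rw [ea, eb]
      simp [seqCol]
  -- the simulated play is consistent with σB
  have hplay' : PlayB (Sum.inl q0) (seqDelta δ) (seqCol col) σB π' := by
    constructor
    · have := he 0
      simpa [h0] using this
    · intro m
      rcases Nat.even_or_odd m with ⟨n, hn⟩ | ⟨n, hn⟩
      · refine ⟨a' n, ?_⟩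
        have hm : m = 2 * n := by omega
        subst hm
        rw [he n, ho n]
        rfl
      · refine ⟨a' n, ?_⟩
        subst hn
        have e2 : 2 * n + 1 + 1 = 2 * (n + 1) := by omega
        rw [e2, he (n + 1), ho n, (hhist n).2]
        show Sum.inl (π (n + 1)) = Sum.inl (δ (π n) (a' n)
          (σB (seqHist (colorHist col π n) ++ [none]) (Sum.inr (π n, a' n))))
        rw [← ha' n]
  -- derive contradiction with the sequential winning strategy
  refine hσ π' hplay' ⟨colorSeq col π, hW, ?_, ?_⟩
  case _ =>
    -- every erased prefix is a prefix of colorSeq col π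
    intro n
    have hred : ∀ m, (prefixWord (colorSeq (seqCol col) π') m).reduceOption =
        prefixWord (colorSeq col π) (m / 2) := by
      intro m
      have hpw : ∀ j, prefixWord (colorSeq (seqCol col) π') j =
          colorHist (seqCol col) π' j := fun _ => rfl
      have hpw2 : ∀ j, prefixWord (colorSeq col π) j = colorHist col π j := fun _ => rfl
      rcases Nat.even_or_odd m with ⟨k, hk⟩ | ⟨k, hk⟩
      · have hm : m = 2 * k := by omega
        subst hm
        rw [hpw, (hhist k).1, reduceOption_seqHist, hpw2]
        congr 1
        omega
      · subst hk
        rw [hpw, (hhist k).2, hpw2]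
        have : (2 * k + 1) / 2 = k := by omega
        rw [this]
        simp [List.reduceOption_append, reduceOption_seqHist]
    rw [hred n]
    exact isPrefixOfSeq_prefixWord _ _
  case _ =>
    have hred : ∀ m, ((prefixWord (colorSeq (seqCol col) π') m).reduceOption).length
        = m / 2 := by
      intro m
      have hpw : ∀ j, prefixWord (colorSeq (seqCol col) π') j =
          colorHist (seqCol col) π' j := fun _ => rfl
      rcases Nat.even_or_odd m with ⟨k, hk⟩ | ⟨k, hk⟩
      · have hm : m = 2 * k := by omega
        subst hm
        rw [hpw, (hhist k).1, reduceOption_seqHist]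
        simp [colorHist]
        try omega
      · subst hk
        rw [hpw, (hhist k).2]
        simp [List.reduceOption_append, reduceOption_seqHist, colorHist]
        try omega
    simp only [hred]
    exact Filter.tendsto_atTop_atTop.mpr (fun b => ⟨2 * b, fun n hn => by omega⟩)
end

section
/- Let C = ⟨A, B, Q, q0, δ, K, col⟩ be a deterministic concurrent arena (not necessarily locally determined) and W ⊆ K^ω. If Player A has a winning color strategy in the sequential game ⟨Seq(C), Seq(W)⟩, then Player A has a winning color strategy in ⟨C, W⟩. -/
open MeasureTheory
open scoped Classical

universe u

def embedHist {K : Type u} (h : List K) : List (Option K) :=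
  h.flatMap (fun c => [none, some c])

lemma reduce_embed {K : Type u} (h : List K) : (embedHist h).reduceOption = h := by
  induction h with
  | nil => rfl
  | cons c t ih =>
    show (none :: some c :: embedHist t).reduceOption = c :: t
    simp [List.reduceOption_cons_of_none, List.reduceOption_cons_of_some, ih]

lemma embed_append {K : Type u} (h : List K) (c : K) :
    embedHist (h ++ [c]) = embedHist h ++ [none, some c] := by
  simp [embedHist]

/-- For any deterministic concurrent arena (not necessarily locally determined):
if Player A has a winning color strategy in the sequential game `⟨Seq(C), Seq(W)⟩`,
then Player A has a winning color strategy in `⟨C, W⟩`. -/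
theorem stmt7 {A B Q K : Type u} [Nonempty A] [Nonempty B] [Nonempty Q] [Nonempty K]
    (q0 : Q) (δ : Q → A → B → Q) (col : Q → Q → K) (W : Set (ℕ → K))
    (hseq : ∃ σA : List (Option K) → Q ⊕ Q × A → A,
      WinA (Sum.inl q0) (seqDelta δ) (seqCol col) (SeqObj W) σA) :
    ∃ sA : List K → Q → A, WinA q0 δ col W sA := by
  obtain ⟨σA, hσ⟩ := hseq
  refine ⟨fun h q => σA (embedHist h) (Sum.inl q), ?_⟩
  intro π hπ
  -- actions taken along π
  set a : ℕ → A := fun n => σA (embedHist (colorHist col π n)) (Sum.inl (π n)) with ha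
  -- sequential play
  set π' : ℕ → Q ⊕ Q × A := fun n =>
    if n % 2 = 0 then Sum.inl (π (n / 2)) else Sum.inr (π (n / 2), a (n / 2)) with hπ'
  have heven : ∀ n, π' (2 * n) = Sum.inl (π n) := by
    intro n; simp [hπ', Nat.mul_mod_right, Nat.mul_div_cancel_left _ (by norm_num : 0 < 2)]
  have hodd : ∀ n, π' (2 * n + 1) = Sum.inr (π n, a n) := by
    intro n
    have h1 : (2 * n + 1) % 2 = 1 := by omega
    have h2 : (2 * n + 1) / 2 = n := by omega
    simp [hπ', h1, h2]
  -- key history lemma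
  have hhist : ∀ n, colorHist (seqCol col) π' (2 * n) = embedHist (colorHist col π n) := by
    intro n
    induction n with
    | zero => rfl
    | succ n ih =>
      have e1 : 2 * (n + 1) = (2 * n + 1) + 1 := by ring
      have e2 : π' (2 * n + 1 + 1) = Sum.inl (π (n + 1)) := by
        rw [show 2 * n + 1 + 1 = 2 * (n + 1) by ring]; exact heven (n + 1)
      rw [e1, colorHist_succ, colorHist_succ, ih,
        hodd n, heven n, e2, colorHist_succ col π n, embed_append]
      simp [seqCol, List.append_assoc]
  -- π' is consistent with σA
  have hplay : PlayA (Sum.inl q0) (seqDelta δ) (seqCol col) σA π' := by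
    constructor
    · simpa using (hπ.1 ▸ heven 0)
    · intro m
      rcases Nat.even_or_odd m with ⟨n, hn⟩ | ⟨n, hn⟩
      · subst hn
        refine ⟨Classical.arbitrary B, ?_⟩
        rw [show n + n = 2 * n by ring, hodd n, heven n, hhist n]
        rfl
      · subst hn
        obtain ⟨b, hb⟩ := hπ.2 n
        refine ⟨b, ?_⟩
        rw [show 2 * n + 1 + 1 = 2 * (n + 1) by ring, hodd n, heven (n + 1)]
        simp [seqDelta, hb, ha]
  -- hence its color sequence is in SeqObj W
  obtain ⟨ρ, hρW, hproj, _⟩ := hσ π' hplay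
  -- identify ρ with the color sequence of π
  have : colorSeq col π = ρ := by
    funext i
    have h1 : prefixWord (colorSeq (seqCol col) π') (2 * (i + 1))
        = colorHist (seqCol col) π' (2 * (i + 1)) := rfl
    have h2 := hproj (2 * (i + 1))
    rw [h1, hhist, reduce_embed] at h2
    have hlen : i < (colorHist col π (i + 1)).length := by
      simp [colorHist]
    have h3 := h2 i hlen
    simp only [colorHist, List.get_ofFn] at h3
    simpa [colorSeq] using h3
  rw [this]; exact hρW
end

section
/- Let K be a non-empty set and let L ⊆ (Option K)^* be a regular language. Say that ρ ∈ K^ω is the projection of ρ' ∈ (Option K)^ω if for every n ∈ ℕ the finite word φ(ρ'_0 ⋯ ρ'_{n-1}) is a prefix of ρ and the lengths |φ(ρ'_0 ⋯ ρ'_{n-1})| tend to infinity as n → ∞ (equivalently, ρ' has infinitely many entries of the form some k and the sequence of their values, read in order, is ρ). Then {ρ ∈ K^ω | ρ is the projection of some ρ' ∈ [L]} = [φ[L]]. -/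
universe u

/-- `L` is a regular language over `K`: it uses only finitely many letters and it is
accepted by a deterministic finite automaton with finitely many states. -/
def RegularLang {K : Type u} (L : Set (List K)) : Prop :=
  ∃ Sig : Finset K, (∀ w ∈ L, ∀ a ∈ w, a ∈ Sig) ∧
    ∃ (σ : Type u) (_ : Fintype σ) (M : DFA K σ), ∀ w : List K, w ∈ M.accepts ↔ w ∈ L

/-- `[L]`: the infinite sequences all of whose finite prefixes are prefixes of
words of `L`. -/
def LimitLang {K : Type u} (L : Set (List K)) : Set (ℕ → K) :=
  {ρ | ∀ n : ℕ, ∃ w ∈ L, prefixWord ρ n <+: w}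

/-- `ρ ≺_W ρ'` iff `ρ ∉ W` and `ρ' ∈ W`. -/
def PrefLt {K : Type u} (W : Set (ℕ → K)) (ρ ρ' : ℕ → K) : Prop := ρ ∉ W ∧ ρ' ∈ W

/-- `ρ ⪯_W ρ'` iff `¬(ρ' ≺_W ρ)`. -/
def PrefLe {K : Type u} (W : Set (ℕ → K)) (ρ ρ' : ℕ → K) : Prop := ¬ PrefLt W ρ' ρ

/-- `N ⪯_W N'` iff every element of `N` is `⪯_W` some element of `N'`. -/
def SetLe {K : Type u} (W : Set (ℕ → K)) (N N' : Set (ℕ → K)) : Prop :=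
  ∀ ρ ∈ N, ∃ ρ' ∈ N', PrefLe W ρ ρ'

/-- `N ≺_W N'` iff some element of `N'` is `≻_W` every element of `N`. -/
def SetLt {K : Type u} (W : Set (ℕ → K)) (N N' : Set (ℕ → K)) : Prop :=
  ∃ ρ' ∈ N', ∀ ρ ∈ N, PrefLt W ρ ρ'

/-- Left-fold iteration of an update function along a finite word. -/
def iterUpd {M K : Type u} (μ : M → K → M) (m : M) (ρ : List K) : M := ρ.foldl μ m

/-- `L^M_{m,m'}`: the words driving the memory from `m` to `m'`. -/
def MemLang {M K : Type u} (μ : M → K → M) (m m' : M) : Set (List K) :=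
  {ρ | iterUpd μ m ρ = m'}

/-- The language `ρ · L`. -/
def consLang {K : Type u} (ρ : List K) (L : Set (List K)) : Set (List K) :=
  {w | ∃ v ∈ L, w = ρ ++ v}

/-- Concatenation of languages. -/
def catLang {K : Type u} (L L' : Set (List K)) : Set (List K) :=
  {w | ∃ u ∈ L, ∃ v ∈ L', w = u ++ v}

/-- Kleene star of a language. -/
def kstarLang {K : Type u} (L : Set (List K)) : Set (List K) :=
  {w | ∃ ls : List (List K), (∀ u ∈ ls, u ∈ L) ∧ w = ls.flatten}

/-- `W` is `M`-monotone for the memory skeleton `⟨M, minit, μ⟩`. -/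
def MMonotone {M K : Type u} (μ : M → K → M) (minit : M) (W : Set (ℕ → K)) : Prop :=
  ∀ m : M, ∀ L1 L2 : Set (List K), RegularLang L1 → RegularLang L2 →
    (∃ ρ ∈ MemLang μ minit m,
        SetLt W (LimitLang (consLang ρ L1)) (LimitLang (consLang ρ L2))) →
    ∀ ρ' ∈ MemLang μ minit m,
        SetLe W (LimitLang (consLang ρ' L1)) (LimitLang (consLang ρ' L2))

/-- `W` is `M`-selective for the memory skeleton `⟨M, minit, μ⟩`. -/
def MSelective {M K : Type u} (μ : M → K → M) (minit : M) (W : Set (ℕ → K)) : Prop :=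
  ∀ ρ : List K, ∀ L1 L2 L3 : Set (List K),
    RegularLang L1 → RegularLang L2 → RegularLang L3 →
    L1 ⊆ MemLang μ (iterUpd μ minit ρ) (iterUpd μ minit ρ) →
    L2 ⊆ MemLang μ (iterUpd μ minit ρ) (iterUpd μ minit ρ) →
    SetLe W (LimitLang (consLang ρ (catLang (kstarLang (L1 ∪ L2)) L3)))
      (LimitLang (consLang ρ (kstarLang L1)) ∪ LimitLang (consLang ρ (kstarLang L2)) ∪
        LimitLang (consLang ρ L3))

/-- The sequential version of an update function: `none` leaves the memory
unchanged, `some k` updates by `k`. -/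
def seqUpd {M K : Type u} (μ : M → K → M) : M → Option K → M :=
  fun m o => match o with
    | none => m
    | some k => μ m k

section Aux
variable {K : Type u}

lemma aux_prefixWord_length (ρ : ℕ → K) (n : ℕ) : (prefixWord ρ n).length = n := by
  simp [prefixWord]

lemma aux_prefixWord_getElem (ρ : ℕ → K) (n i : ℕ) (h : i < (prefixWord ρ n).length) :
    (prefixWord ρ n)[i] = ρ i := by
  simp [prefixWord]

lemma aux_isPrefixOfSeq_of_prefix {x : List K} {ρ : ℕ → K} {n : ℕ}
    (h : x <+: prefixWord ρ n) : IsPrefixOfSeq x ρ := by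
  intro i hi
  rw [List.get_eq_getElem, h.getElem hi, aux_prefixWord_getElem]

lemma aux_prefixWord_prefix_of_isPrefixOfSeq {x : List K} {ρ : ℕ → K}
    (h : IsPrefixOfSeq x ρ) {n : ℕ} (hn : n ≤ x.length) : prefixWord ρ n <+: x := by
  have : x.take n = prefixWord ρ n := by
    apply List.ext_getElem
    · simp [aux_prefixWord_length, hn]
    · intro i h1 h2
      have hn' : i < n := by rw [aux_prefixWord_length] at h2; exact h2
      rw [List.getElem_take, aux_prefixWord_getElem]
      have := h i (by omega)
      simpa using this
  rw [← this]
  exact List.take_prefix n x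

lemma aux_reduceOption_prefix {l₁ l₂ : List (Option K)} (h : l₁ <+: l₂) :
    l₁.reduceOption <+: l₂.reduceOption := by
  obtain ⟨t, rfl⟩ := h
  rw [List.reduceOption_append]
  exact List.prefix_append _ _

lemma aux_prefixWord_succ (ρ : ℕ → K) (n : ℕ) :
    prefixWord ρ (n + 1) = prefixWord ρ n ++ [ρ n] := by
  rw [prefixWord, List.ofFn_succ']
  simp [prefixWord, List.concat_eq_append]

lemma aux_exists_prefix_reduceOption :
    ∀ (w : List (Option K)) (p : List K), p <+: w.reduceOption →
      ∃ u, u <+: w ∧ u.reduceOption = p := by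
  intro w
  induction w with
  | nil => intro p hp; simp at hp; exact ⟨[], by simp [hp]⟩
  | cons x w ih =>
    intro p hp
    match x with
    | none =>
      rw [List.reduceOption_cons_of_none] at hp
      obtain ⟨u, hu, hru⟩ := ih p hp
      exact ⟨none :: u, List.cons_prefix_cons.2 ⟨rfl, hu⟩, by
        rw [List.reduceOption_cons_of_none]; exact hru⟩
    | some a =>
      rw [List.reduceOption_cons_of_some] at hp
      match p with
      | [] => exact ⟨[], List.nil_prefix, rfl⟩
      | b :: p =>
        obtain ⟨hb, hp'⟩ := List.cons_prefix_cons.1 hp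
        obtain ⟨u, hu, hru⟩ := ih p hp'
        exact ⟨some a :: u, List.cons_prefix_cons.2 ⟨rfl, hu⟩, by
          rw [List.reduceOption_cons_of_some, hru, hb]⟩

lemma aux_reduceOption_split :
    ∀ (u : List (Option K)) (p : List K) (k : K), u.reduceOption = p ++ [k] →
      ∃ a b, u = a ++ some k :: b ∧ a.reduceOption = p ∧ b.reduceOption = [] := by
  intro u
  induction u with
  | nil => intro p k h; simp at h
  | cons x u ih =>
    intro p k h
    match x with
    | none =>
      rw [List.reduceOption_cons_of_none] at h
      obtain ⟨a, b, h1, h2, h3⟩ := ih p k h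
      exact ⟨none :: a, b, by rw [h1]; rfl, by rw [List.reduceOption_cons_of_none]; exact h2, h3⟩
    | some x =>
      rw [List.reduceOption_cons_of_some] at h
      match p with
      | [] =>
        simp only [List.nil_append, List.cons.injEq] at h
        exact ⟨[], u, by simp [h.1], rfl, h.2⟩
      | y :: p =>
        simp only [List.cons_append, List.cons.injEq] at h
        obtain ⟨a, b, h1, h2, h3⟩ := ih p k h.2
        exact ⟨some x :: a, b, by rw [h1, h.1]; rfl,
          by rw [List.reduceOption_cons_of_some, h2, h.1], h3⟩

end Aux

section Koenig
variable {σ : Type u}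

lemma aux_exists_infinite_fiber [Finite σ] {S : Set ℕ} (hS : S.Infinite) (f : ℕ → σ) :
    ∃ v, {m | m ∈ S ∧ f m = v}.Infinite := by
  by_contra h
  push_neg at h
  have : S.Finite := by
    have : S = ⋃ v : σ, {m | m ∈ S ∧ f m = v} := by
      ext m; simp only [Set.mem_iUnion, Set.mem_setOf_eq]
      exact ⟨fun hm => ⟨f m, hm, rfl⟩, fun ⟨v, hv, _⟩ => hv⟩
    rw [this]
    exact Set.finite_iUnion h
  exact hS this

lemma aux_infinite_above {S : Set ℕ} (hS : S.Infinite) (n : ℕ) :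
    {m | m ∈ S ∧ n < m}.Infinite := by
  have : {m | m ∈ S ∧ n < m} = S \ {m | m ≤ n} := by
    ext m; simp only [Set.mem_setOf_eq, Set.mem_diff, not_le]
  rw [this]
  exact hS.diff (Set.finite_le_nat n)

def auxDescend (g : ℕ → σ → σ) : ℕ → ℕ → σ → σ
  | _, 0, q => q
  | n, k+1, q => g n (auxDescend g (n+1) k q)

noncomputable def auxFstep [Finite σ] (c : ℕ → ℕ → σ) (n : ℕ)
    (S : {S : Set ℕ // S.Infinite}) : {S : Set ℕ // S.Infinite} :=
  ⟨_, Classical.choose_spec (aux_exists_infinite_fiber (aux_infinite_above S.2 n)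
        (fun m => c m n))⟩

lemma auxFstep_spec [Finite σ] (c : ℕ → ℕ → σ) (n : ℕ) (S : {S : Set ℕ // S.Infinite}) :
    (auxFstep c n S).1 ⊆ S.1 ∧ (∀ m ∈ (auxFstep c n S).1, n < m) ∧
      ∀ m m', m ∈ (auxFstep c n S).1 → m' ∈ (auxFstep c n S).1 → c m n = c m' n := by
  refine ⟨fun m hm => hm.1.1, fun m hm => hm.1.2, fun m m' hm hm' => ?_⟩
  have h1 : c m n = Classical.choose (aux_exists_infinite_fiber (aux_infinite_above S.2 n)
      (fun m => c m n)) := hm.2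
  have h2 : c m' n = Classical.choose (aux_exists_infinite_fiber (aux_infinite_above S.2 n)
      (fun m => c m n)) := hm'.2
  rw [h1, h2]

lemma aux_koenig [Finite σ] (Good : ℕ → σ → Prop) (Edge : ℕ → σ → σ → Prop)
    (hA : ∀ n, ∃ q, Good n q)
    (hB : ∀ n q', Good (n+1) q' → ∃ q, Good n q ∧ Edge n q q') :
    ∃ f : ℕ → σ, ∀ n, Good n (f n) ∧ Edge n (f n) (f (n+1)) := by
  have hne : Nonempty σ := ⟨(hA 0).choose⟩
  classical
  -- parent function
  set g : ℕ → σ → σ := fun n q' =>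
    if h : Good (n+1) q' then (hB n q' h).choose else Classical.arbitrary σ with hgdef
  have hg : ∀ n q', Good (n+1) q' → Good n (g n q') ∧ Edge n (g n q') q' := by
    intro n q' h
    simp only [hgdef, dif_pos h]
    exact (hB n q' h).choose_spec
  have hP1 : ∀ k n (q : σ), Good (n + k) q → Good n (auxDescend g n k q) := by
    intro k
    induction k with
    | zero => intro n q h; exact h
    | succ k ih =>
      intro n q h
      have h' : Good ((n+1) + k) q := by rw [show (n+1)+k = n+(k+1) by omega]; exact h
      have := ih (n+1) q h'
      exact (hg n _ this).1
  set x : ℕ → σ := fun m => (hA m).choose with hxdef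
  set c : ℕ → ℕ → σ := fun m n => auxDescend g n (m - n) (x m) with hcdef
  have hGoodc : ∀ {n m : ℕ}, n ≤ m → Good n (c m n) := by
    intro n m h
    have : Good (n + (m - n)) (x m) := by
      rw [show n + (m - n) = m by omega]; exact (hA m).choose_spec
    exact hP1 _ _ _ this
  have hstep : ∀ {n m : ℕ}, n < m → c m n = g n (c m (n+1)) := by
    intro n m h
    have h1 : m - n = (m - (n+1)) + 1 := by omega
    show auxDescend g n (m - n) (x m) = _
    rw [h1]
    rfl
  have hEdgec : ∀ {n m : ℕ}, n + 1 ≤ m → Edge n (c m n) (c m (n+1)) := by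
    intro n m h
    have h1 := hGoodc (show n+1 ≤ m from h)
    rw [hstep (show n < m by omega)]
    exact (hg n _ h1).2
  -- chain of infinite sets
  set F : ℕ → {S : Set ℕ // S.Infinite} :=
    fun n => Nat.rec ⟨Set.univ, Set.infinite_univ⟩ (fun n S => auxFstep c n S) n with hFdef
  have hFsucc : ∀ n, F (n+1) = auxFstep c n (F n) := fun n => rfl
  have hFsub : ∀ n, (F (n+1)).1 ⊆ (F n).1 := by
    intro n; rw [hFsucc]; exact (auxFstep_spec c n (F n)).1
  have hFlt : ∀ n, ∀ m ∈ (F (n+1)).1, n < m := by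
    intro n; rw [hFsucc]; exact (auxFstep_spec c n (F n)).2.1
  have hFeq : ∀ n, ∀ m m', m ∈ (F (n+1)).1 → m' ∈ (F (n+1)).1 → c m n = c m' n := by
    intro n; rw [hFsucc]; exact (auxFstep_spec c n (F n)).2.2
  set pick : ℕ → ℕ := fun n => ((F (n+1)).2.nonempty).choose with hpickdef
  have hpick : ∀ n, pick n ∈ (F (n+1)).1 := fun n => ((F (n+1)).2.nonempty).choose_spec
  refine ⟨fun n => c (pick n) n, fun n => ?_⟩
  constructor
  · exact hGoodc (le_of_lt (hFlt n _ (hpick n)))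
  · have hm2 : pick (n+1) ∈ (F (n+2)).1 := hpick (n+1)
    have hm1 : pick (n+1) ∈ (F (n+1)).1 := hFsub (n+1) hm2
    have heq : c (pick (n+1)) n = c (pick n) n := hFeq n _ _ hm1 (hpick n)
    have hlt : n + 1 ≤ pick (n+1) := le_of_lt (hFlt (n+1) _ hm2)
    have := hEdgec (n := n) (m := pick (n+1)) (by omega)
    rwa [heq] at this

end Koenig

section Hard
variable {K σ : Type u}

/-- Coreachability of a state. -/
def auxCoreach (M : DFA (Option K) σ) (q : σ) : Prop :=
  ∃ v, M.evalFrom q v ∈ M.accept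

def auxGood (M : DFA (Option K) σ) (ρ : ℕ → K) (n : ℕ) (q : σ) : Prop :=
  ∃ u : List (Option K), M.eval u = q ∧ u.reduceOption = prefixWord ρ n ∧
    ∀ t, t <+: u → auxCoreach M (M.eval t)

def auxEdge (M : DFA (Option K) σ) (ρ : ℕ → K) (n : ℕ) (q q' : σ) : Prop :=
  ∃ v : List (Option K), M.evalFrom q v = q' ∧ v.reduceOption = [ρ n] ∧
    ∀ t, t <+: v → auxCoreach M (M.evalFrom q t)

lemma aux_eval_append (M : DFA (Option K) σ) (u t : List (Option K)) :
    M.eval (u ++ t) = M.evalFrom (M.eval u) t := M.evalFrom_of_append _ _ _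

lemma aux_hard [Finite σ] (M : DFA (Option K) σ) (L : Set (List (Option K)))
    (hM : ∀ w, w ∈ M.accepts ↔ w ∈ L) (ρ : ℕ → K)
    (hρ : ρ ∈ LimitLang (List.reduceOption '' L)) :
    ∃ ρ' ∈ LimitLang L, IsProjOf ρ ρ' := by
  classical
  have hPre1 : ∀ (u w : List (Option K)), w ∈ L → u <+: w → auxCoreach M (M.eval u) := by
    rintro u w hw ⟨t, rfl⟩
    refine ⟨t, ?_⟩
    have : M.eval (u ++ t) ∈ M.accept := (M.mem_accepts).1 ((hM _).2 hw)
    rwa [aux_eval_append] at this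
  have hPre2 : ∀ u : List (Option K), auxCoreach M (M.eval u) → ∃ w ∈ L, u <+: w := by
    rintro u ⟨v, hv⟩
    refine ⟨u ++ v, (hM _).1 ?_, List.prefix_append _ _⟩
    rw [DFA.mem_accepts, aux_eval_append]
    exact hv
  -- Level sets are nonempty
  have hA : ∀ n, ∃ q, auxGood M ρ n q := by
    intro n
    obtain ⟨w', ⟨w, hwL, rfl⟩, hpre⟩ := hρ n
    obtain ⟨u, huw, hur⟩ := aux_exists_prefix_reduceOption w _ hpre
    exact ⟨M.eval u, u, rfl, hur, fun t ht => hPre1 t w hwL (ht.trans huw)⟩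
  -- Every good state has a good parent
  have hB : ∀ n q', auxGood M ρ (n+1) q' →
      ∃ q, auxGood M ρ n q ∧ auxEdge M ρ n q q' := by
    rintro n q' ⟨u', hev, hred, hco⟩
    rw [aux_prefixWord_succ] at hred
    obtain ⟨a, b, rfl, ha, hb⟩ := aux_reduceOption_split u' _ _ hred
    refine ⟨M.eval a, ⟨a, rfl, ha, fun t ht => hco t (ht.trans (List.prefix_append _ _))⟩,
      ⟨some (ρ n) :: b, ?_, ?_, ?_⟩⟩
    · rw [← hev]
      exact (aux_eval_append M a _).symm
    · rw [List.reduceOption_cons_of_some, hb]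
    · intro t ht
      obtain ⟨s, hs⟩ := ht
      have h1 : a ++ t <+: a ++ some (ρ n) :: b :=
        ⟨s, by rw [List.append_assoc, hs]⟩
      have := hco (a ++ t) h1
      rwa [aux_eval_append] at this
  obtain ⟨f, hf⟩ := aux_koenig (auxGood M ρ) (auxEdge M ρ) hA hB
  -- witnesses
  set u₀ : List (Option K) := (hf 0).1.choose with hu0def
  have hu₀ := (hf 0).1.choose_spec
  set v : ℕ → List (Option K) := fun n => (hf n).2.choose with hvdef
  have hv : ∀ n, M.evalFrom (f n) (v n) = f (n+1) ∧ (v n).reduceOption = [ρ n] ∧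
      ∀ t, t <+: v n → auxCoreach M (M.evalFrom (f n) t) := fun n => (hf n).2.choose_spec
  set W : ℕ → List (Option K) := fun n => Nat.rec u₀ (fun n w => w ++ v n) n with hWdef
  have hWsucc : ∀ n, W (n+1) = W n ++ v n := fun n => rfl
  have hW : ∀ n, M.eval (W n) = f n ∧ (W n).reduceOption = prefixWord ρ n ∧
      ∀ t, t <+: W n → auxCoreach M (M.eval t) := by
    intro n
    induction n with
    | zero => exact hu₀
    | succ n ih =>
      obtain ⟨ih1, ih2, ih3⟩ := ih
      rw [hWsucc]
      refine ⟨?_, ?_, ?_⟩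
      · rw [aux_eval_append, ih1]
        exact (hv n).1
      · rw [List.reduceOption_append, ih2, (hv n).2.1, aux_prefixWord_succ]
      · intro t ht
        rcases le_or_gt t.length (W n).length with hle | hlt
        · exact ih3 t (List.prefix_of_prefix_length_le ht (List.prefix_append _ _) hle)
        · have h1 : W n <+: t :=
            List.prefix_of_prefix_length_le (List.prefix_append _ _) ht (le_of_lt hlt)
          obtain ⟨t', rfl⟩ := h1
          have h2 : t' <+: v n := by
            obtain ⟨s, hs⟩ := ht
            rw [List.append_assoc] at hs
            exact ⟨s, List.append_cancel_left hs⟩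
          have h3 := (hv n).2.2 t' h2
          rwa [aux_eval_append, ih1]
  have hlen : ∀ n, n ≤ (W n).length := by
    intro n
    have := (hW n).2.1
    calc n = (W n).reduceOption.length := by rw [this, aux_prefixWord_length]
    _ ≤ (W n).length := List.reduceOption_length_le _
  have hmono : ∀ {n m : ℕ}, n ≤ m → W n <+: W m := by
    intro n m h
    induction m with
    | zero => rw [Nat.le_zero.1 h]
    | succ m ih =>
      rcases Nat.lt_or_ge n (m+1) with h' | h'
      · exact (ih (by omega)).trans (by rw [hWsucc]; exact List.prefix_append _ _)
      · rw [Nat.le_antisymm h h']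
  -- the infinite sequence
  set ρ' : ℕ → Option K := fun i => (W (i+1)).getD i none with hρ'def
  have hagree : ∀ n i (h : i < (W n).length), (W n)[i] = ρ' i := by
    intro n i h
    have hi : i < (W (i+1)).length := by have := hlen (i+1); omega
    have : (W n)[i] = (W (i+1))[i] := by
      rcases le_total n (i+1) with hle | hle
      · exact (hmono hle).getElem h
      · exact ((hmono hle).getElem hi).symm
    rw [this, hρ'def]
    exact (List.getD_eq_getElem _ _ hi).symm
  have hpw : ∀ n m, m ≤ (W n).length → prefixWord ρ' m = (W n).take m := by
    intro n m hm
    apply List.ext_getElem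
    · simp [aux_prefixWord_length, hm]
    · intro i h1 h2
      rw [aux_prefixWord_getElem, List.getElem_take]
      exact (hagree n i (by rw [List.length_take] at h2; omega)).symm
  have hpwW : ∀ n, prefixWord ρ' ((W n).length) = W n := by
    intro n; rw [hpw n _ le_rfl, List.take_length]
  have hpwpre : ∀ m, prefixWord ρ' m <+: W m := by
    intro m
    rw [hpw m m (hlen m)]
    exact List.take_prefix _ _
  refine ⟨ρ', ?_, ?_, ?_⟩
  · -- ρ' ∈ LimitLang L
    intro m
    have hco := (hW m).2.2 _ (hpwpre m)
    obtain ⟨w, hwL, hpre⟩ := hPre2 _ hco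
    exact ⟨w, hwL, hpre⟩
  · -- prefix condition
    intro n
    have h1 : (prefixWord ρ' n).reduceOption <+: prefixWord ρ n := by
      have := aux_reduceOption_prefix (hpwpre n)
      rwa [(hW n).2.1] at this
    exact aux_isPrefixOfSeq_of_prefix h1
  · -- tendsto
    apply Filter.tendsto_atTop_atTop_of_monotone
    · intro m m' hmm
      apply List.IsPrefix.length_le
      apply aux_reduceOption_prefix
      apply aux_prefixWord_prefix_of_isPrefixOfSeq
      · intro i hi
        rw [List.get_eq_getElem, aux_prefixWord_getElem]
      · rw [aux_prefixWord_length]; exact hmm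
    · intro b
      refine ⟨(W b).length, ?_⟩
      rw [hpwW b, (hW b).2.1, aux_prefixWord_length]
end Hard


/-- For a regular language `L` over `Option K`, the projections of the elements of
`[L]` are exactly the elements of `[φ[L]]`, where `φ = List.reduceOption` is the
erasing projection. -/
theorem stmt13 {K : Type u} [Nonempty K]
    (L : Set (List (Option K))) (hL : RegularLang L) :
    {ρ : ℕ → K | ∃ ρ' ∈ LimitLang L, IsProjOf ρ ρ'} =
      LimitLang (List.reduceOption '' L) := by
  ext ρ
  simp only [Set.mem_setOf_eq]
  constructor
  · rintro ⟨ρ', hρ'L, hpref, htend⟩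
    intro n
    obtain ⟨m, hm⟩ := (htend.eventually_ge_atTop n).exists
    obtain ⟨w, hwL, hpre⟩ := hρ'L m
    refine ⟨w.reduceOption, ⟨w, hwL, rfl⟩, ?_⟩
    exact (aux_prefixWord_prefix_of_isPrefixOfSeq (hpref m) hm).trans
      (aux_reduceOption_prefix hpre)
  · intro hρ
    obtain ⟨Sig, hSig, σ, hfin, M, hM⟩ := hL
    have : Finite σ := @Finite.of_fintype σ hfin
    exact aux_hard M L hM ρ hρ
end
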